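/- Let X = P^1 and let n < 0 or n ≥ k ≥ 0. Then the k-th jet bundle of L^n = O(n) satisfies J^k(O(n)) ≅ O(n-k) ⊗ C^{k+1} as a holomorphic vector bundle; i.e., J^k(O(n)) is isomorphic to a direct sum of k+1 copies of O(n-k). Moreover this isomorphism can be chosen SL(2,C)-equivariantly, with C^{k+1} = Sym^k(V) as SL(2,C)-module. -/

import Mathlib

/-!
STATEMENT 10: Let X = P¹ and let n < 0 or n ≥ k ≥ 0.  Then the k-th jet bundle of
L^n = O(n) satisfies J^k(O(n)) ≅ O(n-k) ⊗ ℂ^{k+1}, i.e. J^k(O(n)) is isomorphic to a direct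
sum of k+1 copies of O(n-k).  (Moreover this isomorphism can be chosen SL(2,ℂ)-equivariantly,
with ℂ^{k+1} = Sym^k(V) as SL(2,ℂ)-module.)

Formalization notes (transition-matrix model): cover P¹ by the standard charts U₀
(coordinate z) and U₁ (w = 1/z).  A bundle is given by its transition matrix over
ℂ* ⊆ ℂ[z,z⁻¹], two such being equivalent iff they differ by holomorphic invertible gauges
over U₀ (entries in ℂ[z]) and U₁ (entries in ℂ[z⁻¹]).  O(a) has transition function zᵃ.
A k-jet of a section s of O(n) at z₀ ∈ U₀ is recorded by its Taylor coefficients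
(a₀, …, a_k) at z₀ in the chart-0 trivialization.  If s₀(z) = zⁿ·s₁(1/z) is the transition
rule for sections of O(n), the Taylor coefficients at z of s₀ and of s₁ (at 1/z) are related
by the lower-triangular matrix (computed from s₀(z+t) = (z+t)ⁿ s₁(1/(z+t))):
  A_{ij}(z) = (-1)^j · C(n-j, i-j) · z^{n-i-j}   (0 ≤ j ≤ i ≤ k),
where C(a, r) = a(a-1)⋯(a-r+1)/r! is the generalized binomial coefficient.  This matrix
`jetTransition n k` is the transition matrix of J^k(O(n)).  The statement: for n < 0 or
n ≥ k, `jetTransition n k` is equivalent to the diagonal matrix z^{n-k}·1_{k+1}, the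
transition matrix of O(n-k)^{⊕(k+1)}.  (The SL(2,ℂ)-equivariance refinement is not captured
by this transition-matrix model.)
-/

open LaurentPolynomial Finset

/-- Generalized binomial coefficient `C(a, r) = a(a-1)⋯(a-r+1)/r!` as a complex number. -/
noncomputable def gbinom (a : ℤ) (r : ℕ) : ℂ :=
  (∏ t ∈ Finset.range r, ((a : ℂ) - (t : ℂ))) / (Nat.factorial r : ℂ)

/-- The transition matrix of the jet bundle `J^k(O(n))` on `P¹` in the two-chart
description: `A_{ij}(z) = (-1)^j C(n-j, i-j) z^{n-i-j}` for `j ≤ i`, `0` otherwise. -/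
noncomputable def jetTransition (n : ℤ) (k : ℕ) :
    Matrix (Fin (k + 1)) (Fin (k + 1)) (LaurentPolynomial ℂ) :=
  Matrix.of fun i j =>
    if j.val ≤ i.val then
      LaurentPolynomial.C ((-1 : ℂ) ^ j.val * gbinom (n - j.val) (i.val - j.val)) *
        T (n - i.val - j.val)
    else 0

/-- `f` is holomorphic on the chart `U₀`. -/
def IsPolyFun (f : LaurentPolynomial ℂ) : Prop := ∀ i : ℤ, i < 0 → f.coeff i = 0

/-- `f` is holomorphic on the chart `U₁`. -/
def IsAntiPolyFun (f : LaurentPolynomial ℂ) : Prop := ∀ i : ℤ, 0 < i → f.coeff i = 0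

/-- Holomorphic invertible gauge over `U₀`. -/
def IsPolyGauge {r : ℕ} (P : Matrix (Fin r) (Fin r) (LaurentPolynomial ℂ)) : Prop :=
  (∀ i j, IsPolyFun (P i j)) ∧
    ∃ P' : Matrix (Fin r) (Fin r) (LaurentPolynomial ℂ),
      (∀ i j, IsPolyFun (P' i j)) ∧ P * P' = 1 ∧ P' * P = 1

/-- Holomorphic invertible gauge over `U₁`. -/
def IsAntiPolyGauge {r : ℕ} (Q : Matrix (Fin r) (Fin r) (LaurentPolynomial ℂ)) : Prop :=
  (∀ i j, IsAntiPolyFun (Q i j)) ∧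
    ∃ Q' : Matrix (Fin r) (Fin r) (LaurentPolynomial ℂ),
      (∀ i j, IsAntiPolyFun (Q' i j)) ∧ Q * Q' = 1 ∧ Q' * Q = 1

/-- The transition matrices `A`, `B` define isomorphic holomorphic bundles on `P¹`. -/
def BundleEquiv {r : ℕ} (A B : Matrix (Fin r) (Fin r) (LaurentPolynomial ℂ)) : Prop :=
  ∃ P Q : Matrix (Fin r) (Fin r) (LaurentPolynomial ℂ),
    IsPolyGauge P ∧ IsAntiPolyGauge Q ∧ B = P * A * Q

open Polynomial Finset in

lemma core (l i m : ℕ) (h : m < l) :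
    ∑ s ∈ range (l+1), ((-1:ℂ)^s * (l.choose s) * ((i+s).choose m)) = 0 := by
  have key : ((1:ℂ[X]) + X)^i * (-X)^l
      = ∑ s ∈ range (l+1), (((-1:ℂ)^s * (l.choose s)) • ((1:ℂ[X]) + X)^(i+s)) := by
    have hb : ((-((1:ℂ[X]) + X)) + 1)^l
        = ∑ s ∈ range (l+1), (-((1:ℂ[X])+X))^s * 1^(l-s) * (Polynomial.C (l.choose s : ℂ)) := by
      have := add_pow (-((1:ℂ[X]) + X)) 1 l
      simpa using this
    have hx : (-X : ℂ[X]) = (-((1:ℂ[X]) + X)) + 1 := by ring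
    rw [hx, hb, Finset.mul_sum]
    refine Finset.sum_congr rfl fun s _ => ?_
    rw [neg_pow]
    rw [Algebra.smul_def]
    simp only [pow_add, one_pow, mul_one, map_mul, map_pow, map_neg, map_one, map_natCast]
    ring
  have h2 := congrArg (fun p => Polynomial.coeff p m) key
  simp only [finset_sum_coeff, Polynomial.coeff_smul, coeff_one_add_X_pow, smul_eq_mul] at h2
  rw [show ((1:ℂ[X]) + X)^i * (-X)^l = ((-1:ℂ)^l) • (((1:ℂ[X]) + X)^i * X^l) by
    rw [neg_pow]; rw [Algebra.smul_def]; simp; ring] at h2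
  rw [Polynomial.coeff_smul, Polynomial.coeff_mul_X_pow', if_neg (by omega)] at h2
  simp only [smul_zero] at h2
  exact h2.symm


section supp
variable (S : Set ℤ) (h0 : (0:ℤ) ∈ S) (hadd : ∀ a b : ℤ, a ∈ S → b ∈ S → a + b ∈ S)

def SuppIn (f : LaurentPolynomial ℂ) : Prop := ∀ i : ℤ, i ∉ S → f.coeff i = 0

lemma suppIn_zero : SuppIn S 0 := fun i _ => rfl

lemma suppIn_single (e : ℤ) (a : ℂ) (he : e ∈ S) : SuppIn S (C a * T e) := by
  intro i hi
  rw [← single_eq_C_mul_T]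
  rw [AddMonoidAlgebra.coeff_single, Finsupp.single_apply, if_neg]
  rintro rfl; exact hi he

include h0 in
lemma suppIn_one : SuppIn S 1 := by
  have : (1 : LaurentPolynomial ℂ) = C 1 * T 0 := by simp
  rw [this]; exact suppIn_single S 0 1 h0

lemma suppIn_add {f g} (hf : SuppIn S f) (hg : SuppIn S g) : SuppIn S (f + g) := by
  intro i hi
  rw [AddMonoidAlgebra.coeff_add, Finsupp.add_apply, hf i hi, hg i hi, add_zero]

lemma suppIn_smul {f} (u : ℤˣ) (hf : SuppIn S f) : SuppIn S (u • f) := by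
  intro i hi
  rw [AddMonoidAlgebra.coeff_smul, Finsupp.smul_apply, hf i hi, smul_zero]

include hadd in
lemma suppIn_mul {f g} (hf : SuppIn S f) (hg : SuppIn S g) : SuppIn S (f * g) := by
  intro x hx
  rw [AddMonoidAlgebra.mul_apply]
  rw [Finsupp.sum]
  refine Finset.sum_eq_zero fun a₁ ha₁ => ?_
  rw [Finsupp.sum]
  refine Finset.sum_eq_zero fun a₂ ha₂ => ?_
  rw [if_neg]
  rintro rfl
  exact hx (hadd _ _ (by by_contra hc; exact (Finsupp.mem_support_iff.mp ha₁) (hf _ hc))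
    (by by_contra hc; exact (Finsupp.mem_support_iff.mp ha₂) (hg _ hc)))

include h0 hadd in
lemma suppIn_sum {α : Type*} (s : Finset α) (f : α → LaurentPolynomial ℂ)
    (hf : ∀ a ∈ s, SuppIn S (f a)) : SuppIn S (∑ a ∈ s, f a) := by
  classical
  induction s using Finset.induction_on with
  | empty => simpa using suppIn_zero S
  | @insert a s' hni ih =>
    rw [Finset.sum_insert hni]
    exact suppIn_add S (hf a (mem_insert_self a s')) (ih fun b hb => hf b (mem_insert_of_mem hb))

include h0 hadd in
lemma suppIn_prod {α : Type*} (s : Finset α) (f : α → LaurentPolynomial ℂ)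
    (hf : ∀ a ∈ s, SuppIn S (f a)) : SuppIn S (∏ a ∈ s, f a) := by
  classical
  induction s using Finset.induction_on with
  | empty => simpa using suppIn_one S h0
  | @insert a s' hni ih =>
    rw [Finset.prod_insert hni]
    exact suppIn_mul S hadd (hf a (mem_insert_self a s')) (ih fun b hb => hf b (mem_insert_of_mem hb))

include h0 hadd in
lemma suppIn_det {r : ℕ} (M : Matrix (Fin r) (Fin r) (LaurentPolynomial ℂ))
    (hM : ∀ i j, SuppIn S (M i j)) : SuppIn S M.det := by
  rw [Matrix.det_apply]
  exact suppIn_sum S h0 hadd _ _ fun σ _ =>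
    suppIn_smul S _ (suppIn_prod S h0 hadd _ _ fun i _ => hM _ _)

include h0 hadd in
lemma suppIn_adjugate {r : ℕ} (M : Matrix (Fin r) (Fin r) (LaurentPolynomial ℂ))
    (hM : ∀ i j, SuppIn S (M i j)) : ∀ i j, SuppIn S (M.adjugate i j) := by
  intro i j
  rw [Matrix.adjugate_apply]
  refine suppIn_det S h0 hadd _ fun i' j' => ?_
  rw [Matrix.updateRow_apply]
  split_ifs with h1
  · rcases eq_or_ne j' i with rfl | hne
    · simpa [Pi.single_apply] using suppIn_one S h0
    · simpa [Pi.single_apply, hne] using suppIn_zero S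
  · exact hM i' j'

end supp

lemma isPolyFun_iff (f : LaurentPolynomial ℂ) : IsPolyFun f ↔ SuppIn {i : ℤ | 0 ≤ i} f := by
  constructor <;> intro h i hi <;> exact h i (by simpa using hi)

lemma isAntiPolyFun_iff (f : LaurentPolynomial ℂ) : IsAntiPolyFun f ↔ SuppIn {i : ℤ | i ≤ 0} f := by
  constructor <;> intro h i hi <;> exact h i (by simpa using hi)

noncomputable def Qp (n : ℤ) (r : ℕ) : ℂ := ∏ u ∈ range r, ((n:ℂ) - u)

lemma Qp_mul' (n : ℤ) (a d : ℕ) :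
    Qp n a * (∏ t ∈ range d, ((n:ℂ) - a - t)) = Qp n (a + d) := by
  unfold Qp
  rw [prod_range_add]
  congr 1
  exact prod_congr rfl fun t _ => by push_cast; ring

lemma Qp_mul (n : ℤ) (a b : ℕ) (hab : a ≤ b) :
    Qp n a * (∏ t ∈ range (b-a), ((n:ℂ) - a - t)) = Qp n b := by
  rw [Qp_mul' n a (b-a), show a + (b-a) = b by omega]

lemma gbinom_nat_sub (n : ℤ) (a : ℕ) (r : ℕ) :
    gbinom (n - a) r = (∏ t ∈ range r, ((n:ℂ) - a - t)) / (Nat.factorial r : ℂ) := by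
  unfold gbinom
  congr 1
  exact prod_congr rfl fun t _ => by push_cast; ring

lemma Qp_ne (n : ℤ) (k : ℕ) (h : n < 0 ∨ (k:ℤ) ≤ n) (r : ℕ) (hr : r ≤ k) : Qp n r ≠ 0 := by
  unfold Qp
  rw [Finset.prod_ne_zero_iff]
  intro u hu
  rw [mem_range] at hu
  have : ((n:ℂ) - u) = ((n - u : ℤ) : ℂ) := by push_cast; ring
  rw [this, Int.cast_ne_zero]
  omega

noncomputable def pc (n : ℤ) (k i j : ℕ) : ℂ :=
  (-1:ℂ)^(i+j) * (j.choose i) * ((k-i).choose (j-i)) / gbinom (n - i) (j - i)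

noncomputable def cc (n : ℤ) (j m : ℕ) : ℂ := (-1:ℂ)^m * gbinom (n - m) (j - m)

lemma term_eq (n : ℤ) (k : ℕ) (h : n < 0 ∨ (k:ℤ) ≤ n) (i m s : ℕ)
    (his : i + s ≤ k) (hm : m ≤ k) :
    pc n k i (i+s) * (if m ≤ i+s then cc n (i+s) m else 0)
      = ((-1:ℂ)^m * (Nat.factorial m) * Qp n i / ((Nat.factorial i) * Qp n m))
        * ((-1:ℂ)^s * ((k-i).choose s) * ((i+s).choose m)) := by
  by_cases hby : m ≤ i + s
  · rw [if_pos hby]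
    unfold pc cc
    have e1 : i + s - i = s := by omega
    rw [e1, gbinom_nat_sub n i s, gbinom_nat_sub n m (i+s-m)]
    set N1 : ℂ := ∏ t ∈ range s, ((n:ℂ) - i - t) with hN1
    set N2 : ℂ := ∏ t ∈ range (i+s-m), ((n:ℂ) - m - t) with hN2
    have hQi : Qp n i ≠ 0 := Qp_ne n k h i (by omega)
    have hQm : Qp n m ≠ 0 := Qp_ne n k h m hm
    have hQis : Qp n (i+s) ≠ 0 := Qp_ne n k h (i+s) his
    have hq1 : Qp n i * N1 = Qp n (i+s) := by
      rw [hN1]; have := Qp_mul n i (i+s) (by omega); rwa [show i+s-i = s by omega] at this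
    have hq2 : Qp n m * N2 = Qp n (i+s) := Qp_mul n m (i+s) hby
    have hN1ne : N1 ≠ 0 := by
      intro hz; rw [hz, mul_zero] at hq1; exact hQis hq1.symm
    have hfact : ((i+s).choose i : ℂ) * (Nat.factorial i) * (Nat.factorial s)
        = ((i+s).choose m) * (Nat.factorial m) * (Nat.factorial (i+s-m)) := by
      have h1 := Nat.choose_mul_factorial_mul_factorial (show i ≤ i+s by omega)
      have h2 := Nat.choose_mul_factorial_mul_factorial hby
      have : (i+s).choose i * Nat.factorial i * Nat.factorial (i+s-i)
          = (i+s).choose m * Nat.factorial m * Nat.factorial (i+s-m) := by rw [h1, h2]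
      rw [e1] at this
      exact_mod_cast congrArg (Nat.cast : ℕ → ℂ) this
    have hsign : (-1:ℂ)^(i+(i+s)) = (-1:ℂ)^s := by
      rw [show i+(i+s) = 2*i+s by omega, pow_add, pow_mul]
      norm_num
    rw [hsign]
    have hfs : (Nat.factorial s : ℂ) ≠ 0 := by exact_mod_cast Nat.factorial_ne_zero s
    have hfd : (Nat.factorial (i+s-m) : ℂ) ≠ 0 := by exact_mod_cast Nat.factorial_ne_zero _
    have hfi : (Nat.factorial i : ℂ) ≠ 0 := by exact_mod_cast Nat.factorial_ne_zero i
    have hfm : (Nat.factorial m : ℂ) ≠ 0 := by exact_mod_cast Nat.factorial_ne_zero m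
    have hN1' : N1 = Qp n (i+s) / Qp n i := by rw [eq_div_iff hQi, mul_comm, hq1]
    have hN2' : N2 = Qp n (i+s) / Qp n m := by rw [eq_div_iff hQm, mul_comm, hq2]
    rw [hN1', hN2']
    field_simp
    linear_combination ((k-i).choose s : ℂ) * hfact
  · rw [if_neg hby]
    rw [Nat.choose_eq_zero_of_lt (by omega : i + s < m)]
    simp


noncomputable def gam (n : ℤ) (k i m : ℕ) : ℂ :=
  ∑ j ∈ range (k+1), (if i ≤ j then pc n k i j else 0) * (if m ≤ j then cc n j m else 0)

lemma gamma_zero (n : ℤ) (k : ℕ) (h : n < 0 ∨ (k:ℤ) ≤ n) (i m : ℕ) (hmk : m ≤ k)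
    (him : i + m < k) : gam n k i m = 0 := by
  unfold gam
  have hsub : ∑ j ∈ range (k+1), (if i ≤ j then pc n k i j else 0) * (if m ≤ j then cc n j m else 0)
      = ∑ j ∈ Ico i (k+1), (if i ≤ j then pc n k i j else 0) * (if m ≤ j then cc n j m else 0) := by
    refine (Finset.sum_subset ?_ ?_).symm
    · intro x hx; rw [mem_Ico] at hx; rw [mem_range]; omega
    · intro x hx hnx
      rw [mem_range] at hx; rw [mem_Ico] at hnx
      rw [if_neg (by omega), zero_mul]
  rw [hsub, Finset.sum_Ico_eq_sum_range, show k + 1 - i = (k-i) + 1 by omega]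
  have hterm : ∀ s ∈ range ((k-i)+1),
      (if i ≤ i+s then pc n k i (i+s) else 0) * (if m ≤ i+s then cc n (i+s) m else 0)
      = ((-1:ℂ)^m * (Nat.factorial m) * Qp n i / ((Nat.factorial i) * Qp n m))
          * ((-1:ℂ)^s * ((k-i).choose s) * ((i+s).choose m)) := by
    intro s hs
    rw [mem_range] at hs
    rw [if_pos (by omega)]
    exact term_eq n k h i m s (by omega) hmk
  rw [Finset.sum_congr rfl hterm, ← Finset.mul_sum, core (k-i) i m (by omega), mul_zero]

noncomputable def Pm (n : ℤ) (k : ℕ) : Matrix (Fin (k+1)) (Fin (k+1)) (LaurentPolynomial ℂ) :=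
  Matrix.of fun i j =>
    if (i:ℕ) ≤ (j:ℕ) then C (pc n k i j) * T ((j:ℕ) - (i:ℕ) : ℤ) else 0

noncomputable def Bm (n : ℤ) (k : ℕ) : Matrix (Fin (k+1)) (Fin (k+1)) (LaurentPolynomial ℂ) :=
  Matrix.of fun i j =>
    if (j:ℕ) ≤ (i:ℕ) then C (cc n i j) * T ((k:ℤ) - (i:ℕ) - (j:ℕ)) else 0

lemma A_eq (n : ℤ) (k : ℕ) : jetTransition n k = (T (n - k) : LaurentPolynomial ℂ) • Bm n k := by
  ext i j
  simp only [jetTransition, Bm, Matrix.smul_apply, Matrix.of_apply]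
  split_ifs with hij
  · rw [smul_eq_mul, cc]
    rw [show (n:ℤ) - (i:ℕ) - (j:ℕ) = (n - k) + ((k:ℤ) - (i:ℕ) - (j:ℕ)) by ring, T_add]
    ring
  · rw [smul_zero]

lemma gbinom_zero (a : ℤ) : gbinom a 0 = 1 := by simp [gbinom]


lemma PB_entry (n : ℤ) (k : ℕ) (i m : Fin (k+1)) :
    (Pm n k * Bm n k) i m = C (gam n k i m) * T ((k:ℤ) - (i:ℕ) - (m:ℕ)) := by
  rw [Matrix.mul_apply]
  have hterm : ∀ j : Fin (k+1), Pm n k i j * Bm n k j m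
      = C ((if (i:ℕ) ≤ (j:ℕ) then pc n k i j else 0) * (if (m:ℕ) ≤ (j:ℕ) then cc n j m else 0))
          * T ((k:ℤ) - (i:ℕ) - (m:ℕ)) := by
    intro j
    simp only [Pm, Bm, Matrix.of_apply]
    split_ifs with h1 h2 h3
    · rw [mul_mul_mul_comm, ← map_mul, ← T_add]
      congr 2
      ring
    · simp
    · simp
    · simp
  rw [Finset.sum_congr rfl fun j _ => hterm j, ← Finset.sum_mul, ← map_sum]
  congr 2
  rw [gam, ← Fin.sum_univ_eq_sum_range
    (fun j => (if (i:ℕ) ≤ j then pc n k i j else 0) * (if (m:ℕ) ≤ j then cc n j m else 0)) (k+1)]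

lemma T_prod {α : Type*} (s : Finset α) (b : α → ℤ) :
    ∏ a ∈ s, (T (b a) : LaurentPolynomial ℂ) = T (∑ a ∈ s, b a) := by
  classical
  induction s using Finset.induction_on with
  | empty => simp
  | @insert a s' hni ih => rw [Finset.prod_insert hni, Finset.sum_insert hni, T_add, ih]

lemma det_Pm (n : ℤ) (k : ℕ) : (Pm n k).det = 1 := by
  rw [Matrix.det_of_upperTriangular]
  · have : ∀ i : Fin (k+1), Pm n k i i = 1 := by
      intro i
      simp only [Pm, Matrix.of_apply, if_pos le_rfl]
      rw [pc]
      simp [gbinom_zero, ← two_mul, pow_mul]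
    rw [Finset.prod_congr rfl fun i _ => this i, Finset.prod_const_one]
  · intro i j hij
    simp only [Pm, Matrix.of_apply]
    rw [if_neg]
    simp only [id] at hij
    exact fun hc => absurd (Fin.lt_iff_val_lt_val.mp hij) (not_lt.mpr hc)

lemma det_Bm (n : ℤ) (k : ℕ) :
    (Bm n k).det = C (∏ i ∈ range (k+1), (-1:ℂ)^i) := by
  rw [Matrix.det_of_lowerTriangular]
  · have h1 : ∀ i : Fin (k+1), Bm n k i i = C ((-1:ℂ)^(i:ℕ)) * T ((k:ℤ) - (i:ℕ) - (i:ℕ)) := by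
      intro i
      simp only [Bm, Matrix.of_apply, if_pos le_rfl, cc]
      rw [Nat.sub_self, gbinom_zero, mul_one]
    rw [Finset.prod_congr rfl fun i _ => h1 i, Finset.prod_mul_distrib, ← map_prod, T_prod]
    have h2 : ∑ i : Fin (k+1), ((k:ℤ) - (i:ℕ) - (i:ℕ)) = 0 := by
      rw [Fin.sum_univ_eq_sum_range (fun j => (k:ℤ) - j - j) (k+1)]
      have hg : (∑ j ∈ range (k+1), (j:ℤ)) * 2 = ((k+1):ℤ) * k := by
        have h5 := Finset.sum_range_id_mul_two (k+1)
        have h0 : (k+1)*(k+1-1) = (k+1)*k := by simp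
        rw [h0] at h5
        rw [← Nat.cast_sum]
        exact_mod_cast h5
      have h4 : ∑ j ∈ range (k+1), ((k:ℤ) - j - j)
          = ((k+1):ℤ) * k - (∑ j ∈ range (k+1), (j:ℤ)) * 2 := by
        rw [Finset.sum_sub_distrib, Finset.sum_sub_distrib, Finset.sum_const, card_range]
        push_cast; ring
      rw [h4, hg]; ring
    rw [h2, T_zero, mul_one]
    congr 1
    exact Fin.prod_univ_eq_prod_range (fun i => (-1:ℂ)^i) (k+1)
  · intro i j hij
    simp only [Bm, Matrix.of_apply]
    rw [if_neg]
    have : (i:ℕ) < (j:ℕ) := hij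
    omega

theorem jet_of_On_splits (n : ℤ) (k : ℕ) (h : n < 0 ∨ (k : ℤ) ≤ n) :
    BundleEquiv (jetTransition n k) (Matrix.diagonal fun _ : Fin (k + 1) => T (n - k)) := by
  classical
  set Spos : Set ℤ := {i : ℤ | 0 ≤ i} with hSpos
  set Sneg : Set ℤ := {i : ℤ | i ≤ 0} with hSneg
  have hpos0 : (0:ℤ) ∈ Spos := by simp only [hSpos, Set.mem_setOf_eq]; omega
  have hneg0 : (0:ℤ) ∈ Sneg := by simp only [hSneg, Set.mem_setOf_eq]; omega
  have hposadd : ∀ a b : ℤ, a ∈ Spos → b ∈ Spos → a + b ∈ Spos := by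
    intro a b ha hb; simp only [hSpos, Set.mem_setOf_eq] at *; omega
  have hnegadd : ∀ a b : ℤ, a ∈ Sneg → b ∈ Sneg → a + b ∈ Sneg := by
    intro a b ha hb; simp only [hSneg, Set.mem_setOf_eq] at *; omega
  set M := Pm n k * Bm n k with hM
  set e : ℂ := ∏ i ∈ Finset.range (k+1), (-1:ℂ)^i with he
  have hdetM : M.det = C e := by rw [hM, Matrix.det_mul, det_Pm, det_Bm, one_mul]
  have hee : (C e : LaurentPolynomial ℂ) * C e = 1 := by
    rw [← map_mul]
    have h1 : e * e = 1 := by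
      rw [he, ← Finset.prod_mul_distrib]
      have : ∀ i ∈ Finset.range (k+1), (-1:ℂ)^i * (-1:ℂ)^i = 1 := by
        intro i _; rw [← mul_pow]; norm_num
      rw [Finset.prod_congr rfl this, Finset.prod_const_one]
    rw [h1, map_one]
  -- support of entries of Pm
  have hPsupp : ∀ i j, SuppIn Spos (Pm n k i j) := by
    intro i j
    simp only [Pm, Matrix.of_apply]
    split_ifs with hij
    · exact suppIn_single Spos _ _ (by simp only [hSpos, Set.mem_setOf_eq]; omega)
    · exact suppIn_zero Spos
  -- support of entries of M
  have hMsupp : ∀ i j, SuppIn Sneg (M i j) := by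
    intro i j
    rw [hM, PB_entry]
    by_cases hle : (k:ℤ) - (i:ℕ) - (j:ℕ) ≤ 0
    · exact suppIn_single Sneg _ _ hle
    · have hij : (i:ℕ) + (j:ℕ) < k := by omega
      rw [gamma_zero n k h i j (by omega) hij, map_zero, zero_mul]
      exact suppIn_zero Sneg
  refine ⟨Pm n k, C e • M.adjugate, ?_, ?_, ?_⟩
  · refine ⟨fun i j => (isPolyFun_iff _).mpr (hPsupp i j), (Pm n k).adjugate, ?_, ?_, ?_⟩
    · exact fun i j => (isPolyFun_iff _).mpr
        (suppIn_adjugate Spos hpos0 hposadd _ hPsupp i j)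
    · rw [Matrix.mul_adjugate, det_Pm, one_smul]
    · rw [Matrix.adjugate_mul, det_Pm, one_smul]
  · have hCe : SuppIn Sneg (C e : LaurentPolynomial ℂ) := by
      have : (C e : LaurentPolynomial ℂ) = C e * T 0 := by rw [T_zero, mul_one]
      rw [this]
      exact suppIn_single Sneg _ _ hneg0
    refine ⟨?_, M, fun i j => (isAntiPolyFun_iff _).mpr (hMsupp i j), ?_, ?_⟩
    · intro i j
      rw [isAntiPolyFun_iff]
      have : (C e • M.adjugate) i j = C e * M.adjugate i j := rfl
      rw [this]
      exact suppIn_mul Sneg hnegadd hCe (suppIn_adjugate Sneg hneg0 hnegadd _ hMsupp i j)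
    · rw [Matrix.smul_mul, Matrix.adjugate_mul, hdetM, smul_smul, hee, one_smul]
    · rw [Matrix.mul_smul, Matrix.mul_adjugate, hdetM, smul_smul, hee, one_smul]
  · rw [A_eq]
    rw [show Pm n k * ((T (n - (k:ℕ)) : LaurentPolynomial ℂ) • Bm n k) * (C e • M.adjugate)
        = (T (n - (k:ℕ)) : LaurentPolynomial ℂ) • (C e • (M * M.adjugate)) by
      rw [Matrix.mul_smul (Pm n k) (T (n - (k:ℕ)) : LaurentPolynomial ℂ) (Bm n k),
        Matrix.smul_mul, Matrix.mul_smul, ← hM]]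
    rw [Matrix.mul_adjugate, hdetM,
      smul_smul (C e : LaurentPolynomial ℂ) (C e : LaurentPolynomial ℂ)
        (1 : Matrix (Fin (k+1)) (Fin (k+1)) (LaurentPolynomial ℂ)), hee, one_smul]
    ext i j
    simp only [Matrix.diagonal_apply, Matrix.smul_apply, Matrix.one_apply, smul_eq_mul]
    split_ifs <;> simp
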